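/- Let p, k, q be positive integers with p − 2 ≥ k, and let a ≥ 0, m ≥ 1, l ≥ 1, n ≥ 2 be integers satisfying m + a = q, l + n = p, lm + mn − ln = kq, and 2lmn − lm − mn = kq(p − k − 1). Then m = (p + 2kq + √((p+2kq)² + 8kpq(p−k−1)))/(4p), and {l, n} = { (p ± √(p² − p + 2kq − √((p+2kq)² + 8kpq(p−k−1))))/2 }. -/

import Mathlib

/-- Solution of the system arising from a mixed extension of `P₃` of type
`(l, −m, n)` cospectral with `K_{p,k}^q`. -/
theorem mixed_ext_P3_pos_neg_pos (p k q a l m n : ℤ)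
    (hp : 0 < p) (hk : 0 < k) (hq : 0 < q) (hpk : k + 2 ≤ p)
    (ha : 0 ≤ a) (hm : 1 ≤ m) (hl : 1 ≤ l) (hn : 2 ≤ n)
    (h1 : m + a = q) (h2 : l + n = p)
    (h3 : l * m + m * n - l * n = k * q)
    (h4 : 2 * l * m * n - l * m - m * n = k * q * (p - k - 1)) :
    (m : ℝ) =
      ((p : ℝ) + 2 * k * q +
          Real.sqrt (((p : ℝ) + 2 * k * q) ^ 2 + 8 * k * p * q * ((p : ℝ) - k - 1)))
        / (4 * p) ∧
    ({(l : ℝ), (n : ℝ)} : Set ℝ) =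
      { ((p : ℝ) + Real.sqrt ((p : ℝ) ^ 2 - p + 2 * k * q -
            Real.sqrt (((p : ℝ) + 2 * k * q) ^ 2 + 8 * k * p * q * ((p : ℝ) - k - 1)))) / 2,
        ((p : ℝ) - Real.sqrt ((p : ℝ) ^ 2 - p + 2 * k * q -
            Real.sqrt (((p : ℝ) + 2 * k * q) ^ 2 + 8 * k * p * q * ((p : ℝ) - k - 1)))) / 2 } := by
  -- move to ℝ
  have hp' : (0:ℝ) < p := by exact_mod_cast hp
  have hk' : (0:ℝ) < k := by exact_mod_cast hk
  have hq' : (0:ℝ) < q := by exact_mod_cast hq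
  have hm' : (1:ℝ) ≤ m := by exact_mod_cast hm
  have hpk' : (k:ℝ) + 2 ≤ p := by exact_mod_cast hpk
  have h2' : (l:ℝ) + n = p := by exact_mod_cast h2
  have h3' : (l:ℝ) * m + m * n - l * n = k * q := by exact_mod_cast h3
  have h4' : 2 * (l:ℝ) * m * n - l * m - m * n = k * q * ((p:ℝ) - k - 1) := by
    exact_mod_cast h4
  have hln : (l:ℝ) * n = m * p - k * q := by nlinarith [h2', h3']
  have hquad : 2 * (p:ℝ) * m ^ 2 = ((p:ℝ) + 2 * k * q) * m + k * q * ((p:ℝ) - k - 1) := by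
    nlinarith [h2', h3', h4', hln]
  have hDpos : (0:ℝ) ≤ 4 * p * m - ((p:ℝ) + 2 * k * q) := by
    nlinarith [mul_pos hk' hq', mul_pos (mul_pos hk' hq') (by linarith : (0:ℝ) < (p:ℝ) - k - 1)]
  have hDsq : (((p:ℝ) + 2 * k * q) ^ 2 + 8 * k * p * q * ((p : ℝ) - k - 1))
      = (4 * p * m - ((p:ℝ) + 2 * k * q)) ^ 2 := by nlinarith [hquad]
  have hsqrtD : Real.sqrt (((p:ℝ) + 2 * k * q) ^ 2 + 8 * k * p * q * ((p : ℝ) - k - 1))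
      = 4 * p * m - ((p:ℝ) + 2 * k * q) := by
    rw [hDsq, Real.sqrt_sq hDpos]
  constructor
  · rw [hsqrtD]; field_simp; ring
  · have hE : (p:ℝ) ^ 2 - p + 2 * k * q -
        Real.sqrt (((p:ℝ) + 2 * k * q) ^ 2 + 8 * k * p * q * ((p : ℝ) - k - 1))
        = ((l:ℝ) - n) ^ 2 := by
      rw [hsqrtD]
      linear_combination (-((l:ℝ)+n+p))*h2' + 4*hln
    rw [hE]
    rcases le_total (n:ℝ) (l:ℝ) with h | h
    · rw [Real.sqrt_sq (by linarith)]
      have e1 : ((p:ℝ) + ((l:ℝ) - n)) / 2 = l := by linarith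
      have e2 : ((p:ℝ) - ((l:ℝ) - n)) / 2 = n := by linarith
      rw [e1, e2]
    · have : ((l:ℝ) - n) ^ 2 = ((n:ℝ) - l) ^ 2 := by ring
      rw [this, Real.sqrt_sq (by linarith)]
      have e1 : ((p:ℝ) + ((n:ℝ) - l)) / 2 = n := by linarith
      have e2 : ((p:ℝ) - ((n:ℝ) - l)) / 2 = l := by linarith
      rw [e1, e2, Set.pair_comm]
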